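/- Let g be a nonconstant polynomial over a field K of characteristic zero. Then for all sufficiently large k ∈ ℕ, gcd(g(n), g(n+k)) = 1, where g(n+k) denotes the shift of g by k. -/

import Mathlib

open Polynomial

theorem coprime_large_shifts {K : Type*} [Field K] [CharZero K] [DecidableEq K]
    (g : K[X]) (hg : 0 < g.degree) :
    ∃ K₀ : ℕ, ∀ k : ℕ, K₀ ≤ k → gcd g (g.comp (X + C (k : K))) = 1 := by
  classical
  set L := AlgebraicClosure K
  set φ : K →+* L := algebraMap K L
  have hg0 : g ≠ 0 := fun h => by simp [h] at hg
  set G : L[X] := g.map φ with hG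
  have hG0 : G ≠ 0 := (Polynomial.map_ne_zero_iff φ.injective).mpr hg0
  set S : Finset L := G.roots.toFinset with hS
  set D : Finset L := (S ×ˢ S).image (fun p => p.1 - p.2) with hD
  have hinj : Set.InjOn (Nat.cast : ℕ → L) ((Nat.cast : ℕ → L) ⁻¹' ↑D) :=
    fun a _ b _ h => Nat.cast_injective h
  set P : Finset ℕ := D.preimage (Nat.cast : ℕ → L) hinj with hP
  refine ⟨P.sup id + 1, fun k hk => ?_⟩
  rw [← normalize_gcd, normalize_eq_one]
  refine gcd_isUnit_iff_isRelPrime.mpr (IsCoprime.isRelPrime ?_)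
  rw [← isCoprime_map φ]
  set H : L[X] := (g.comp (X + C (k : K))).map φ with hH
  by_contra hcop
  have hgcd : ¬ IsUnit (EuclideanDomain.gcd G H) :=
    fun hu => hcop (EuclideanDomain.gcd_isUnit_iff.mp hu)
  have hd0 : EuclideanDomain.gcd G H ≠ 0 :=
    fun h => hG0 (EuclideanDomain.gcd_eq_zero_iff.mp h).1
  have hdeg : (EuclideanDomain.gcd G H).degree ≠ 0 := by
    intro h
    exact hgcd (Polynomial.isUnit_iff_degree_eq_zero.mpr h)
  obtain ⟨α, hα⟩ := IsAlgClosed.exists_root (k := L) (EuclideanDomain.gcd G H) hdeg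
  have hrootG : G.eval α = 0 :=
    Polynomial.eval_eq_zero_of_dvd_of_eval_eq_zero (EuclideanDomain.gcd_dvd_left G H) hα
  have hrootH : H.eval α = 0 :=
    Polynomial.eval_eq_zero_of_dvd_of_eval_eq_zero (EuclideanDomain.gcd_dvd_right G H) hα
  have hHcomp : H = G.comp (X + C (k : L)) := by
    rw [hH, Polynomial.map_comp]
    simp [hG]
    rw [Polynomial.C_eq_natCast]
  have hrootG' : G.eval (α + (k : L)) = 0 := by
    rw [hHcomp] at hrootH
    simpa [Polynomial.eval_comp, add_comm] using hrootH
  have hmem : ∀ x : L, G.eval x = 0 → x ∈ S := by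
    intro x hx
    rw [hS, Multiset.mem_toFinset, Polynomial.mem_roots hG0]
    exact hx
  have hkD : (k : L) ∈ D := by
    rw [hD]
    refine Finset.mem_image.mpr ⟨(α + (k : L), α), ?_, by ring⟩
    exact Finset.mem_product.mpr ⟨hmem _ hrootG', hmem _ hrootG⟩
  have hkP : k ∈ P := Finset.mem_preimage.mpr hkD
  have := Finset.le_sup (f := id) hkP
  simp only [id] at this
  omega
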